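/- For fixed β > 0 and ε ∈ (0, 1/β), with t_n = n³, s_n = n and y_n = (β/2)t_n − (1/β − ε) log log t_n, the quantity e^{β y_l − (β²/2)(t_l − t_k)} Φ(−y_l/√(t_l − t_k)) is at most (1/√(2π)) · √(t_{2n}) / y_n for all n ≤ k < l ≤ 2n, and this bound tends to 0 as n → ∞. -/

import Mathlib

open Real MeasureTheory Filter Topology

lemma aux_loglog_nonneg (m : ℕ) (hm : 2 ≤ m) : 0 ≤ Real.log (Real.log ((m : ℝ) ^ 3)) := by
  have h2 : (2 : ℝ) ≤ (m : ℝ) := by exact_mod_cast hm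
  apply Real.log_nonneg
  rw [Real.log_pow]
  have hlog2 : (0.6931471803 : ℝ) < Real.log 2 := Real.log_two_gt_d9
  have hmono : Real.log 2 ≤ Real.log m := Real.log_le_log (by norm_num) h2
  push_cast
  nlinarith

lemma aux_loglog_le (m : ℕ) (hm : 2 ≤ m) : Real.log (Real.log ((m : ℝ) ^ 3)) ≤ 3 * m := by
  have h2 : (2 : ℝ) ≤ (m : ℝ) := by exact_mod_cast hm
  have hm0 : (0 : ℝ) < (m : ℝ) := by linarith
  rw [Real.log_pow]
  have hlm : 0 < Real.log m := Real.log_pos (by linarith)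
  have h1 : Real.log m ≤ (m : ℝ) - 1 := Real.log_le_sub_one_of_pos hm0
  have h3 : Real.log (((3 : ℕ) : ℝ) * Real.log m) ≤ ((3 : ℕ) : ℝ) * Real.log m - 1 :=
    Real.log_le_sub_one_of_pos (by positivity)
  push_cast at *
  nlinarith

lemma gauss_tail (x : ℝ) (hx : 0 < x) :
    (∫ z in Set.Iic (-x), (1 / Real.sqrt (2 * π)) * Real.exp (-z ^ 2 / 2)) ≤
      1 / Real.sqrt (2 * π) * (Real.sqrt 1 / x * Real.exp (-x ^ 2 / 2)) := by
  have hc0 : (0 : ℝ) ≤ 1 / Real.sqrt (2 * π) := by positivity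
  have hhalf : (0 : ℝ) < 1 / 2 := by norm_num
  have heq : (fun z : ℝ => Real.exp (-(1 / 2) * z ^ 2)) = fun z : ℝ => Real.exp (-z ^ 2 / 2) := by
    funext z; rw [show -(1 / 2 : ℝ) * z ^ 2 = -z ^ 2 / 2 by ring]
  have hint1 : IntegrableOn (fun z : ℝ => Real.exp (-z ^ 2 / 2)) (Set.Iic (-x)) := by
    have := integrable_exp_neg_mul_sq hhalf
    rw [heq] at this
    exact this.integrableOn
  have hint2 : IntegrableOn (fun z : ℝ => -z * Real.exp (-z ^ 2 / 2)) (Set.Iic (-x)) := by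
    have h0 := (integrable_mul_exp_neg_mul_sq hhalf).neg'
    have h2 : (fun z : ℝ => -(z * Real.exp (-(1 / 2) * z ^ 2)))
        = fun z : ℝ => -z * Real.exp (-z ^ 2 / 2) := by
      funext z; rw [show -(1 / 2 : ℝ) * z ^ 2 = -z ^ 2 / 2 by ring]; ring
    rw [h2] at h0
    exact h0.integrableOn
  have hderiv : ∀ z ∈ Set.Iic (-x),
      HasDerivAt (fun w : ℝ => Real.exp (-w ^ 2 / 2)) (-z * Real.exp (-z ^ 2 / 2)) z := by
    intro z _
    have h1 : HasDerivAt (fun w : ℝ => -w ^ 2 / 2) (-z) z := by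
      have h : HasDerivAt (fun w : ℝ => -w ^ 2 / 2) (-(((2 : ℕ) : ℝ) * z ^ (2 - 1)) / 2) z := ((hasDerivAt_pow 2 z).neg.div_const 2)
      convert h using 1
      simp; ring
    have h2 := h1.exp
    convert h2 using 1
    ring
  have htend : Tendsto (fun w : ℝ => Real.exp (-w ^ 2 / 2)) atBot (𝓝 0) := by
    apply Real.tendsto_exp_atBot.comp
    have h1 : Tendsto (fun w : ℝ => w ^ 2) atBot atTop := by
      have hp : Tendsto (fun w : ℝ => w ^ 2) atTop atTop := tendsto_pow_atTop (by norm_num)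
      have := hp.comp tendsto_abs_atBot_atTop
      simpa [Function.comp_def, sq_abs] using this
    have h2 : Tendsto (fun w : ℝ => -(w ^ 2)) atBot atBot :=
      tendsto_neg_atTop_atBot.comp h1
    exact h2.atBot_div_const (by norm_num)
  have keyeq : ∫ z in Set.Iic (-x), -z * Real.exp (-z ^ 2 / 2) = Real.exp (-x ^ 2 / 2) := by
    have := integral_Iic_of_hasDerivAt_of_tendsto' hderiv hint2 htend
    simpa [neg_sq] using this
  have hmono : (∫ z in Set.Iic (-x), Real.exp (-z ^ 2 / 2)) ≤
      ∫ z in Set.Iic (-x), (1 / x) * (-z * Real.exp (-z ^ 2 / 2)) := by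
    apply setIntegral_mono_on hint1 (hint2.const_mul _) measurableSet_Iic
    intro z hz
    have hz' : z ≤ -x := hz
    have hxz : x ≤ -z := by linarith
    have he : 0 < Real.exp (-z ^ 2 / 2) := Real.exp_pos _
    have h1 : 1 ≤ 1 / x * (-z) := by
      rw [one_div]
      rw [← inv_mul_cancel₀ hx.ne']
      gcongr
    nlinarith
  rw [MeasureTheory.integral_const_mul] at hmono
  rw [keyeq] at hmono
  rw [MeasureTheory.integral_const_mul]
  calc 1 / Real.sqrt (2 * π) * ∫ z in Set.Iic (-x), Real.exp (-z ^ 2 / 2)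
      ≤ 1 / Real.sqrt (2 * π) * (1 / x * Real.exp (-x ^ 2 / 2)) := by
        exact mul_le_mul_of_nonneg_left hmono hc0
    _ = 1 / Real.sqrt (2 * π) * (Real.sqrt 1 / x * Real.exp (-x ^ 2 / 2)) := by
        rw [Real.sqrt_one]

theorem eta_six_bound (β ε : ℝ) (hβ : 0 < β) (hε : 0 < ε) (hεβ : ε < 1 / β)
    (Φ : ℝ → ℝ)
    (hΦ : ∀ z : ℝ, Φ z = ∫ y in Set.Iic z, (1 / Real.sqrt (2 * π)) * Real.exp (-y ^ 2 / 2))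
    (t y : ℕ → ℝ)
    (ht : ∀ n : ℕ, t n = (n : ℝ) ^ 3)
    (hy : ∀ n : ℕ, y n = β / 2 * t n - (1 / β - ε) * Real.log (Real.log (t n))) :
    (∃ N : ℕ, ∀ n ≥ N, ∀ k l : ℕ, n ≤ k → k < l → l ≤ 2 * n →
      Real.exp (β * y l - β ^ 2 / 2 * (t l - t k)) * Φ (-(y l) / Real.sqrt (t l - t k)) ≤
        (1 / Real.sqrt (2 * π)) * Real.sqrt (t (2 * n)) / y n) ∧
    Tendsto (fun n : ℕ => (1 / Real.sqrt (2 * π)) * Real.sqrt (t (2 * n)) / y n)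
      atTop (nhds 0) := by
  obtain ⟨c, hcdef⟩ : ∃ c : ℝ, c = 1 / β - ε := ⟨_, rfl⟩
  have hc : 0 < c := by rw [hcdef]; linarith
  have hy : ∀ n : ℕ, y n = β / 2 * t n - c * Real.log (Real.log (t n)) := by
    intro n; rw [hy, hcdef]
  obtain ⟨N, hNdef⟩ : ∃ N : ℕ, N = ⌈12 * c / β⌉₊ + 2 := ⟨_, rfl⟩
  have hNfacts : ∀ m : ℕ, N ≤ m → 2 ≤ m ∧ 12 * c ≤ β * m := by
    intro m hm
    rw [hNdef] at hm
    have h2 : 2 ≤ m := le_trans (by omega) hm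
    have hceil : (⌈12 * c / β⌉₊ : ℕ) ≤ m := by omega
    have h1 : 12 * c / β ≤ (m : ℝ) := le_trans (Nat.le_ceil _) (by exact_mod_cast hceil)
    constructor
    · exact h2
    · rw [div_le_iff₀ hβ] at h1; linarith
  -- lower bound for y
  have ylower : ∀ m : ℕ, N ≤ m → β / 4 * (m : ℝ) ^ 3 ≤ y m := by
    intro m hm
    obtain ⟨h2, hβm⟩ := hNfacts m hm
    have h2r : (2 : ℝ) ≤ (m : ℝ) := by exact_mod_cast h2
    have hL := aux_loglog_le m h2
    have hL0 := aux_loglog_nonneg m h2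
    rw [hy, ht]
    have hkey : 12 * c * (m : ℝ) ^ 2 ≤ β * (m : ℝ) * (m : ℝ) ^ 2 :=
      mul_le_mul_of_nonneg_right hβm (sq_nonneg _)
    have hcL : c * Real.log (Real.log ((m : ℝ) ^ 3)) ≤ c * (3 * m) :=
      mul_le_mul_of_nonneg_left hL hc.le
    have hmm : (m : ℝ) ≤ (m : ℝ) ^ 2 := by nlinarith
    have h12 : 12 * c * (m : ℝ) ≤ 12 * c * ((m : ℝ) ^ 2) :=
      mul_le_mul_of_nonneg_left hmm (by positivity)
    nlinarith [hkey, hcL, h12]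
  have ypos : ∀ m : ℕ, N ≤ m → 0 < y m := by
    intro m hm
    have := ylower m hm
    have h2r : (2 : ℝ) ≤ (m : ℝ) := by exact_mod_cast (hNfacts m hm).1
    have hp : 0 < β / 4 * (m : ℝ) ^ 3 := by positivity
    linarith
  -- monotonicity of y above N
  have ystep : ∀ j : ℕ, N ≤ j → y j ≤ y (j + 1) := by
    intro j hj
    obtain ⟨h2, hβj⟩ := hNfacts j hj
    have h2r : (2 : ℝ) ≤ (j : ℝ) := by exact_mod_cast h2
    have hL1 := aux_loglog_le (j + 1) (by omega)
    have hL0 := aux_loglog_nonneg j h2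
    rw [hy, hy, ht, ht]
    push_cast at hL1 ⊢
    have hkey : 12 * c * (j : ℝ) ≤ β * (j : ℝ) * (j : ℝ) :=
      mul_le_mul_of_nonneg_right hβj (by linarith)
    have hcL : c * Real.log (Real.log (((j : ℝ) + 1) ^ 3)) ≤ c * (3 * ((j : ℝ) + 1)) :=
      mul_le_mul_of_nonneg_left hL1 hc.le
    have hcL0 : 0 ≤ c * Real.log (Real.log ((j : ℝ) ^ 3)) := mul_nonneg hc.le hL0
    have h2c : c * 2 ≤ c * (j : ℝ) := mul_le_mul_of_nonneg_left h2r hc.le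
    nlinarith [hkey, hcL, hcL0, h2c]
  have ymono : ∀ m p : ℕ, N ≤ m → m ≤ p → y m ≤ y p := by
    intro m p hm hmp
    induction p, hmp using Nat.le_induction with
    | base => exact le_rfl
    | succ p hp ih => exact ih.trans (ystep p (hm.trans hp))
  constructor
  · refine ⟨N, fun n hn k l hnk hkl hl2n => ?_⟩
    have hNl : N ≤ l := le_trans hn (le_trans hnk hkl.le)
    have hyl : 0 < y l := ypos l hNl
    have hkl3 : (k : ℝ) ^ 3 < (l : ℝ) ^ 3 := by
      have hkl' : (k : ℝ) < (l : ℝ) := by exact_mod_cast hkl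
      have hk0 : (0 : ℝ) ≤ (k : ℝ) := Nat.cast_nonneg k
      exact pow_lt_pow_left₀ hkl' hk0 (by norm_num)
    have hT : 0 < t l - t k := by rw [ht, ht]; linarith
    obtain ⟨S, hSdef⟩ : ∃ S : ℝ, S = Real.sqrt (t l - t k) := ⟨_, rfl⟩
    have hS : 0 < S := by rw [hSdef]; exact Real.sqrt_pos.mpr hT
    have hS2 : S ^ 2 = t l - t k := by rw [hSdef]; exact Real.sq_sqrt hT.le
    obtain ⟨x, hxdef⟩ : ∃ x : ℝ, x = y l / S := ⟨_, rfl⟩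
    have hx : 0 < x := by rw [hxdef]; exact div_pos hyl hS
    rw [← hSdef]
    have htail : Φ (-(y l) / S) ≤
        1 / Real.sqrt (2 * π) * (Real.sqrt 1 / x * Real.exp (-x ^ 2 / 2)) := by
      rw [hΦ, neg_div, hxdef]
      exact gauss_tail _ (by rw [← hxdef]; exact hx)
    rw [Real.sqrt_one] at htail
    have hexpA : (0 : ℝ) ≤ Real.exp (β * y l - β ^ 2 / 2 * (t l - t k)) := (Real.exp_pos _).le
    have hxsq : x ^ 2 = y l ^ 2 / (t l - t k) := by
      rw [hxdef, div_pow, hS2]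
    have hxinv : 1 / x = S / y l := by rw [hxdef, one_div_div]
    have hstep1 : Real.exp (β * y l - β ^ 2 / 2 * (t l - t k)) * Φ (-(y l) / S) ≤
        Real.exp (β * y l - β ^ 2 / 2 * (t l - t k)) *
          (1 / Real.sqrt (2 * π) * (1 / x * Real.exp (-x ^ 2 / 2))) :=
      mul_le_mul_of_nonneg_left htail hexpA
    have e1 : Real.exp (β * y l - β ^ 2 / 2 * (t l - t k) - y l ^ 2 / (2 * (t l - t k)))
        = Real.exp (β * y l - β ^ 2 / 2 * (t l - t k)) * Real.exp (-x ^ 2 / 2) := by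
      rw [← Real.exp_add]
      congr 1
      rw [hxsq, neg_div, div_div, mul_comm (t l - t k) 2, ← sub_eq_add_neg]
    have hcalc : Real.exp (β * y l - β ^ 2 / 2 * (t l - t k)) *
          (1 / Real.sqrt (2 * π) * (1 / x * Real.exp (-x ^ 2 / 2)))
        = 1 / Real.sqrt (2 * π) * S / y l *
            Real.exp (β * y l - β ^ 2 / 2 * (t l - t k) - y l ^ 2 / (2 * (t l - t k))) := by
      rw [e1, hxinv]; ring
    have hexple : Real.exp (β * y l - β ^ 2 / 2 * (t l - t k) - y l ^ 2 / (2 * (t l - t k))) ≤ 1 := by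
      rw [Real.exp_le_one_iff]
      have heq2 : β * y l - β ^ 2 / 2 * (t l - t k) - y l ^ 2 / (2 * (t l - t k))
          = -((y l - β * (t l - t k)) ^ 2) / (2 * (t l - t k)) := by
        field_simp
        ring
      rw [heq2]
      apply div_nonpos_of_nonpos_of_nonneg
      · exact neg_nonpos.mpr (sq_nonneg _)
      · linarith
    have hc0 : (0 : ℝ) ≤ 1 / Real.sqrt (2 * π) := by positivity
    have hSle : S ≤ Real.sqrt (t (2 * n)) := by
      rw [hSdef]
      apply Real.sqrt_le_sqrt
      rw [ht, ht, ht]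
      have hl2 : (l : ℝ) ^ 3 ≤ ((2 * n : ℕ) : ℝ) ^ 3 := by
        have hll : (l : ℝ) ≤ ((2 * n : ℕ) : ℝ) := by exact_mod_cast hl2n
        have hl0 : (0 : ℝ) ≤ (l : ℝ) := Nat.cast_nonneg l
        exact pow_le_pow_left₀ hl0 hll 3
      have hk0 : (0 : ℝ) ≤ (k : ℝ) ^ 3 := by positivity
      linarith
    have hyn : 0 < y n := ypos n hn
    have hynl : y n ≤ y l := ymono n l hn (le_trans hnk hkl.le)
    have hfinal : 1 / Real.sqrt (2 * π) * S / y l *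
          Real.exp (β * y l - β ^ 2 / 2 * (t l - t k) - y l ^ 2 / (2 * (t l - t k)))
        ≤ 1 / Real.sqrt (2 * π) * Real.sqrt (t (2 * n)) / y n := by
      calc 1 / Real.sqrt (2 * π) * S / y l *
            Real.exp (β * y l - β ^ 2 / 2 * (t l - t k) - y l ^ 2 / (2 * (t l - t k)))
          ≤ 1 / Real.sqrt (2 * π) * S / y l * 1 := by
            apply mul_le_mul_of_nonneg_left hexple
            exact div_nonneg (mul_nonneg hc0 hS.le) hyl.le
        _ = 1 / Real.sqrt (2 * π) * S / y l := mul_one _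
        _ ≤ 1 / Real.sqrt (2 * π) * Real.sqrt (t (2 * n)) / y n := by
            gcongr
    calc Real.exp (β * y l - β ^ 2 / 2 * (t l - t k)) * Φ (-(y l) / S)
        ≤ _ := hstep1
      _ = _ := hcalc
      _ ≤ _ := hfinal
  · -- tendsto part
    have hc0 : (0 : ℝ) < 1 / Real.sqrt (2 * π) := by positivity
    apply squeeze_zero' (g := fun n : ℕ => (12 * (1 / Real.sqrt (2 * π)) / β) / (n : ℝ))
    · filter_upwards [eventually_ge_atTop N] with n hn
      have hyn : 0 < y n := ypos n hn
      exact div_nonneg (mul_nonneg hc0.le (Real.sqrt_nonneg _)) hyn.le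
    · filter_upwards [eventually_ge_atTop N] with n hn
      obtain ⟨h2, _⟩ := hNfacts n hn
      have h2r : (2 : ℝ) ≤ (n : ℝ) := by exact_mod_cast h2
      have hyn : β / 4 * (n : ℝ) ^ 3 ≤ y n := ylower n hn
      have hynpos : 0 < β / 4 * (n : ℝ) ^ 3 := by positivity
      have hsq : Real.sqrt (t (2 * n)) ≤ 3 * (n : ℝ) ^ 2 := by
        rw [ht]
        have hle : ((2 * n : ℕ) : ℝ) ^ 3 ≤ (3 * (n : ℝ) ^ 2) ^ 2 := by
          push_cast
          nlinarith
        calc Real.sqrt (((2 * n : ℕ) : ℝ) ^ 3) ≤ Real.sqrt ((3 * (n : ℝ) ^ 2) ^ 2) :=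
              Real.sqrt_le_sqrt hle
          _ = 3 * (n : ℝ) ^ 2 := Real.sqrt_sq (by positivity)
      have hnum : 1 / Real.sqrt (2 * π) * Real.sqrt (t (2 * n)) ≤
          1 / Real.sqrt (2 * π) * (3 * (n : ℝ) ^ 2) :=
        mul_le_mul_of_nonneg_left hsq hc0.le
      calc 1 / Real.sqrt (2 * π) * Real.sqrt (t (2 * n)) / y n
          ≤ 1 / Real.sqrt (2 * π) * (3 * (n : ℝ) ^ 2) / (β / 4 * (n : ℝ) ^ 3) :=
            div_le_div₀ (by positivity) hnum hynpos hyn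
        _ = (12 * (1 / Real.sqrt (2 * π)) / β) / (n : ℝ) := by
            have hn0 : (n : ℝ) ≠ 0 := by positivity
            have hsπ : Real.sqrt (2 * π) ≠ 0 := by positivity
            field_simp
            ring
    · exact tendsto_const_div_atTop_nhds_zero_nat _
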